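/- The cubic Chebyshev polynomial f(w) = w³ − 3w is injective on the closed disk {w ∈ ℂ : |w − 3| ≤ 2}. -/

import Mathlib

/-- The cubic Chebyshev polynomial `f(w) = w³ − 3w` is injective on the closed
disk `{w : |w − 3| ≤ 2}`. -/
theorem chebyshev_injective_on_disk :
    Set.InjOn (fun w : ℂ => w ^ 3 - 3 * w) (Metric.closedBall (3 : ℂ) 2) := by
  intro w hw z hz hEq
  simp only [Metric.mem_closedBall, Complex.dist_eq] at hw hz
  simp only at hEq
  by_contra hne
  have h0 : (w - z) * (w^2 + w*z + z^2 - 3) = 0 := by linear_combination hEq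
  have h1 : w^2 + w*z + z^2 - 3 = 0 := by
    rcases mul_eq_zero.1 h0 with h | h
    · exact absurd (sub_eq_zero.1 h) hne
    · exact h
  set d := w - z with hd
  set t := (w - 3) + (z - 3) with ht
  have hdne : d ≠ 0 := sub_ne_zero.2 hne
  have hd2 : d ^ 2 = -3 * (t + 4) * (t + 8) := by
    rw [hd, ht]; linear_combination (4 : ℂ) * h1
  -- norms
  have ht4 : ‖t‖ ≤ 4 := by
    calc ‖t‖ ≤ ‖w - 3‖ + ‖z - 3‖ :=
          norm_add_le _ _
    _ ≤ 4 := by linarith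
  have habs : (‖d‖) ^ 2 = 3 * ‖t + 4‖ * ‖t + 8‖ := by
    have h := congrArg (‖·‖) hd2
    simpa [norm_mul, norm_pow, norm_neg, mul_assoc] using h
  -- parallelogram law
  have hpar : (‖t‖) ^ 2 + (‖d‖) ^ 2
      = 2 * (‖w - 3‖) ^ 2 + 2 * (‖z - 3‖) ^ 2 := by
    rw [hd, ht, Complex.sq_norm, Complex.sq_norm, Complex.sq_norm, Complex.sq_norm]
    simp only [Complex.normSq_apply, Complex.add_re, Complex.add_im, Complex.sub_re,
      Complex.sub_im]
    ring
  have hw2 : (‖w - 3‖) ^ 2 ≤ 4 := by nlinarith [norm_nonneg (w - 3)]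
  have hz2 : (‖z - 3‖) ^ 2 ≤ 4 := by nlinarith [norm_nonneg (z - 3)]
  have hle : (‖d‖) ^ 2 ≤ 16 - (‖t‖) ^ 2 := by linarith
  have hApos : 0 < (‖d‖) ^ 2 := by
    have : ‖d‖ ≠ 0 := norm_ne_zero_iff.mpr hdne
    positivity
  -- triangle inequalities
  have hp : 4 - ‖t‖ ≤ ‖t + 4‖ := by
    have h := norm_add_le (t + 4) (-t)
    have e : (t + 4) + (-t) = (4 : ℂ) := by ring
    rw [e] at h
    rw [norm_neg] at h
    have : ‖(4 : ℂ)‖ = 4 := by norm_num [Complex.norm_ofNat]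
    rw [this] at h
    linarith
  have hq : 8 - ‖t‖ ≤ ‖t + 8‖ := by
    have h := norm_add_le (t + 8) (-t)
    have e : (t + 8) + (-t) = (8 : ℂ) := by ring
    rw [e] at h
    rw [norm_neg] at h
    have : ‖(8 : ℂ)‖ = 8 := by norm_num [Complex.norm_ofNat]
    rw [this] at h
    linarith
  have hpnn : 0 ≤ ‖t + 4‖ := norm_nonneg _
  have hqnn : 0 ≤ ‖t + 8‖ := norm_nonneg _
  have htnn : 0 ≤ ‖t‖ := norm_nonneg _
  nlinarith [mul_nonneg (sub_nonneg.2 hp) hqnn,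
    mul_nonneg (sub_nonneg.2 ht4) (sub_nonneg.2 hq),
    mul_nonneg (sub_nonneg.2 ht4) htnn]
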